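/- Let 1 < p < ∞, u : [a,b] → ℝ Hölder continuous of order r ∈ (0,1] with constant H, and f : [a,b] → ℝ Lipschitz with constant L. Then for all a ≤ t₀ ≤ x ≤ t₁ ≤ b, |∫ₐᵇ f du − [u(x) − u(a)]·f(t₀) − [u(b) − u(x)]·f(t₁)| ≤ L·H·[ (t₀−a)^{r+1}/(rp+1)^{1/p} + (t₁−t₀)^{1−1/p}·( ((x−t₀)^{rp+1} + (t₁−x)^{rp+1}) / (rp+1) )^{1/p} + (b−t₁)^{r+1}/(rp+1)^{1/p} ]. -/

import Mathlib

/-- A tagged partition of the interval `[a, b]`. -/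
structure TaggedPartition (a b : ℝ) where
  n : ℕ
  pts : ℕ → ℝ
  tag : ℕ → ℝ
  mono : ∀ i, pts i ≤ pts (i + 1)
  first : pts 0 = a
  last : pts n = b
  tag_mem : ∀ i, pts i ≤ tag i ∧ tag i ≤ pts (i + 1)

/-- The Riemann–Stieltjes sum of `f` with respect to `u` over a tagged partition. -/
def RSsum (f u : ℝ → ℝ) {a b : ℝ} (P : TaggedPartition a b) : ℝ :=
  ∑ i ∈ Finset.range P.n, f (P.tag i) * (u (P.pts (i + 1)) - u (P.pts i))

/-- `IsRSIntegral f u a b I` means the Riemann–Stieltjes integral `∫ₐᵇ f du` exists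
and equals `I`: Riemann–Stieltjes sums converge to `I` as the mesh tends to `0`. -/
def IsRSIntegral (f u : ℝ → ℝ) (a b I : ℝ) : Prop :=
  ∀ ε > 0, ∃ δ > 0, ∀ P : TaggedPartition a b,
    (∀ i < P.n, P.pts (i + 1) - P.pts i < δ) → |RSsum f u P - I| < ε

/-- The total (Jordan) variation of `u` on `[a, b]`. -/
noncomputable def totalVar (u : ℝ → ℝ) (a b : ℝ) : ℝ :=
  (eVariationOn u (Set.Icc a b)).toReal



lemma bern_aux {r p : ℝ} (hr : 0 < r) (hp : 1 < p) : (r * p + 1) ^ (1 / p) ≤ r + 1 := by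
  have h1 : (1 : ℝ) + p * r ≤ (1 + r) ^ p :=
    one_add_mul_self_le_rpow_one_add (by linarith) hp.le
  have hp0 : (0 : ℝ) < p := by linarith
  have h2 : (r * p + 1) ^ (1 / p) ≤ ((1 + r) ^ p) ^ (1 / p) := by
    apply Real.rpow_le_rpow (by nlinarith) (by nlinarith) (by positivity)
  calc (r * p + 1) ^ (1 / p) ≤ ((1 + r) ^ p) ^ (1 / p) := h2
    _ = (1 + r) ^ (p * (1 / p)) := (Real.rpow_mul (by linarith) _ _).symm
    _ = r + 1 := by rw [mul_one_div_cancel hp0.ne', Real.rpow_one]; ring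

lemma bern_pos {r p : ℝ} (hr : 0 < r) (hp : 1 < p) : 0 < (r * p + 1) ^ (1 / p) := by
  have : (0:ℝ) < r * p + 1 := by nlinarith
  positivity

lemma holder2 {p : ℝ} (hp : 1 < p) {A B C D : ℝ} (hA : 0 ≤ A) (hB : 0 ≤ B)
    (hC : 0 ≤ C) (hD : 0 ≤ D) :
    A ^ (1 - 1/p) * C + B ^ (1 - 1/p) * D ≤
      (A + B) ^ (1 - 1/p) * (C ^ p + D ^ p) ^ (1/p) := by
  have hp0 : (0 : ℝ) < p := by linarith
  have hq0 : 0 < 1 - 1/p := by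
    have : 1/p < 1 := by rw [div_lt_one hp0]; exact hp
    linarith
  by_cases hAB : A + B = 0
  · have hA0 : A = 0 := by linarith
    have hB0 : B = 0 := by linarith
    rw [hA0, hB0, Real.zero_rpow hq0.ne', zero_mul, zero_mul, add_zero]
    positivity
  by_cases hCD : C ^ p + D ^ p = 0
  · have h1 : (0:ℝ) ≤ C ^ p := by positivity
    have h2 : (0:ℝ) ≤ D ^ p := by positivity
    have hC0 : C = 0 :=
      ((Real.rpow_eq_zero_iff_of_nonneg hC).mp (by linarith)).1
    have hD0 : D = 0 :=
      ((Real.rpow_eq_zero_iff_of_nonneg hD).mp (by linarith)).1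
    rw [hC0, hD0, mul_zero, mul_zero, add_zero]
    rw [hC0, hD0] at hCD
    rw [hCD, Real.zero_rpow (by positivity : 1/p ≠ 0), mul_zero]
  have hS : 0 < A + B := lt_of_le_of_ne (by linarith) (Ne.symm hAB)
  have hV : 0 < C ^ p + D ^ p := by
    have h1 : (0:ℝ) ≤ C ^ p := by positivity
    have h2 : (0:ℝ) ≤ D ^ p := by positivity
    rcases lt_or_eq_of_le (by linarith : (0:ℝ) ≤ C ^ p + D ^ p) with h | h
    · exact h
    · exact absurd h.symm hCD
  set S := A + B with hSdef
  set V := C ^ p + D ^ p with hVdef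
  have key : ∀ E F : ℝ, 0 ≤ E → 0 ≤ F →
      E ^ (1 - 1/p) * F ≤ S ^ (1 - 1/p) * V ^ (1/p) *
        ((1 - 1/p) * (E / S) + (1/p) * (F ^ p / V)) := by
    intro E F hE hF
    have hgm : (E / S) ^ (1 - 1/p) * (F ^ p / V) ^ (1/p) ≤
        (1 - 1/p) * (E / S) + (1/p) * (F ^ p / V) :=
      Real.geom_mean_le_arith_mean2_weighted hq0.le (by positivity) (by positivity)
        (by positivity) (by ring)
    have hFp : (F ^ p) ^ (1/p) = F := by
      rw [← Real.rpow_mul hF, mul_one_div_cancel hp0.ne', Real.rpow_one]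
    have hSq : S ^ (1 - 1/p) ≠ 0 := by positivity
    have hVp : V ^ (1/p) ≠ 0 := by positivity
    have heq : E ^ (1 - 1/p) * F = S ^ (1 - 1/p) * V ^ (1/p) *
        ((E / S) ^ (1 - 1/p) * (F ^ p / V) ^ (1/p)) := by
      rw [Real.div_rpow hE hS.le, Real.div_rpow (by positivity) hV.le, hFp]
      field_simp
    rw [heq]
    have hpos : (0:ℝ) ≤ S ^ (1 - 1/p) * V ^ (1/p) := by positivity
    exact mul_le_mul_of_nonneg_left hgm hpos
  have h1 := key A C hA hC
  have h2 := key B D hB hD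
  have hsum : S ^ (1 - 1/p) * V ^ (1/p) *
        ((1 - 1/p) * (A / S) + (1/p) * (C ^ p / V)) +
      S ^ (1 - 1/p) * V ^ (1/p) *
        ((1 - 1/p) * (B / S) + (1/p) * (D ^ p / V)) =
      S ^ (1 - 1/p) * V ^ (1/p) := by
    have e1 : A / S + B / S = 1 := by
      rw [← add_div, hSdef, div_self hS.ne']
    have e2 : C ^ p / V + D ^ p / V = 1 := by
      rw [← add_div, hVdef, div_self hV.ne']
    have : (1 - 1/p) * (A / S) + (1/p) * (C ^ p / V) +
        ((1 - 1/p) * (B / S) + (1/p) * (D ^ p / V)) = 1 := by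
      have : (1 - 1/p) * (A / S + B / S) + (1/p) * (C ^ p / V + D ^ p / V) = 1 := by
        rw [e1, e2]; ring
      linarith [this]
    rw [← mul_add, this, mul_one]
  calc A ^ (1 - 1/p) * C + B ^ (1 - 1/p) * D ≤ _ + _ := add_le_add h1 h2
    _ = S ^ (1 - 1/p) * V ^ (1/p) := hsum

lemma middle_bound {r p : ℝ} (hr : 0 < r) (hp : 1 < p) {A B : ℝ} (hA : 0 ≤ A) (hB : 0 ≤ B) :
    (A ^ (r+1) + B ^ (r+1)) / (r+1) ≤
      (A + B) ^ (1 - 1/p) * ((A ^ (r*p+1) + B ^ (r*p+1)) / (r*p+1)) ^ (1/p) := by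
  have hp0 : (0:ℝ) < p := by linarith
  have hrp1 : (0:ℝ) < r*p+1 := by nlinarith
  have hbp := bern_pos hr hp
  have hexp : (1 - 1/p) + (r*p+1)/p = r + 1 := by field_simp; ring
  have hCpA : (A ^ ((r*p+1)/p)) ^ p = A ^ (r*p+1) := by
    rw [← Real.rpow_mul hA, div_mul_cancel₀ _ hp0.ne']
  have hCpB : (B ^ ((r*p+1)/p)) ^ p = B ^ (r*p+1) := by
    rw [← Real.rpow_mul hB, div_mul_cancel₀ _ hp0.ne']
  have hAsplit : A ^ (r+1) = A ^ (1 - 1/p) * A ^ ((r*p+1)/p) := by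
    rw [← Real.rpow_add' hA (by rw [hexp]; linarith)]
    rw [hexp]
  have hBsplit : B ^ (r+1) = B ^ (1 - 1/p) * B ^ ((r*p+1)/p) := by
    rw [← Real.rpow_add' hB (by rw [hexp]; linarith)]
    rw [hexp]
  have hnum : A ^ (r+1) + B ^ (r+1) ≤
      (A + B) ^ (1 - 1/p) * (A ^ (r*p+1) + B ^ (r*p+1)) ^ (1/p) := by
    rw [hAsplit, hBsplit, ← hCpA, ← hCpB]
    exact holder2 hp hA hB (by positivity) (by positivity)
  calc (A ^ (r+1) + B ^ (r+1)) / (r+1)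
      ≤ (A ^ (r+1) + B ^ (r+1)) / ((r*p+1) ^ (1/p)) := by
        gcongr
        exact bern_aux hr hp
    _ ≤ ((A + B) ^ (1 - 1/p) * (A ^ (r*p+1) + B ^ (r*p+1)) ^ (1/p)) / ((r*p+1) ^ (1/p)) := by
        gcongr
    _ = (A + B) ^ (1 - 1/p) * ((A ^ (r*p+1) + B ^ (r*p+1)) / (r*p+1)) ^ (1/p) := by
        rw [Real.div_rpow (by positivity) hrp1.le]
        ring

lemma rpow_step {r : ℝ} (hr : 0 < r) {t : ℝ} (ht : 0 ≤ t) :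
    t ^ (r+1) + (r+1) * t ^ r ≤ (t+1) ^ (r+1) := by
  rcases eq_or_lt_of_le ht with h0 | h0
  · rw [← h0, Real.zero_rpow (by linarith : r+1 ≠ 0), Real.zero_rpow hr.ne']
    norm_num [Real.one_rpow]
  · have hb := one_add_mul_self_le_rpow_one_add (s := 1/t) (le_trans (by norm_num : (-1:ℝ) ≤ 0) (by positivity))
      (show (1:ℝ) ≤ r+1 by linarith)
    calc t ^ (r+1) + (r+1) * t ^ r = t ^ (r+1) * (1 + (r+1) * (1/t)) := by
          rw [Real.rpow_add_one h0.ne']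
          field_simp
      _ ≤ t ^ (r+1) * (1 + 1/t) ^ (r+1) := by
          apply mul_le_mul_of_nonneg_left hb (by positivity)
      _ = (t+1) ^ (r+1) := by
          rw [← Real.mul_rpow h0.le (by positivity)]
          congr 1
          field_simp

lemma sum_rpow_le {r : ℝ} (hr : 0 < r) (N : ℕ) :
    ∑ i ∈ Finset.range N, (i:ℝ) ^ r ≤ (N:ℝ) ^ (r+1) / (r+1) := by
  induction N with
  | zero => simp [Real.zero_rpow (show r+1 ≠ 0 by linarith)]
  | succ N ih =>
    rw [Finset.sum_range_succ]
    have hstep := rpow_step hr (Nat.cast_nonneg N)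
    have hcast : ((N+1 : ℕ) : ℝ) = (N:ℝ) + 1 := by push_cast; ring
    rw [hcast]
    have h1 : (N:ℝ) ^ (r+1) / (r+1) + (N:ℝ) ^ r =
        ((N:ℝ) ^ (r+1) + (r+1) * (N:ℝ) ^ r) / (r+1) := by
      field_simp
    have h2 : ((N:ℝ) ^ (r+1) + (r+1) * (N:ℝ) ^ r) / (r+1) ≤ ((N:ℝ)+1) ^ (r+1) / (r+1) := by
      gcongr
    linarith


lemma rpow_succ_nonneg {h r : ℝ} (h0 : 0 ≤ h) (hr : 0 < r) : h ^ (r+1) = h ^ r * h := by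
  rcases eq_or_lt_of_le h0 with h0' | h0'
  · rw [← h0', Real.zero_rpow (by linarith : r+1 ≠ 0), Real.zero_rpow hr.ne', zero_mul]
  · rw [Real.rpow_add_one h0'.ne']

section piece
variable (a b H L r : ℝ) (f u : ℝ → ℝ)

lemma piece_est_right (hr : 0 < r) (hH : 0 ≤ H) (hL : 0 ≤ L)
    (hu : ∀ s ∈ Set.Icc a b, ∀ t ∈ Set.Icc a b, |u s - u t| ≤ H * |s - t| ^ r)
    (hf : ∀ s ∈ Set.Icc a b, ∀ t ∈ Set.Icc a b, |f s - f t| ≤ L * |s - t|)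
    {c d : ℝ} (hac : a ≤ c) (hcd : c ≤ d) (hdb : d ≤ b) {N : ℕ} (hN : 0 < N) :
    |(∑ i ∈ Finset.range N,
        f (c + (↑i+1) * ((d-c)/N)) * (u (c + (↑i+1) * ((d-c)/N)) - u (c + ↑i * ((d-c)/N)))) -
      f d * (u d - u c)| ≤ L * H * (d-c) ^ (r+1) / (r+1) := by
  have hN0 : (N:ℝ) ≠ 0 := Nat.cast_ne_zero.mpr hN.ne'
  set h : ℝ := (d - c) / N with hh
  have h0 : 0 ≤ h := div_nonneg (by linarith) (Nat.cast_nonneg N)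
  have hyN : c + (N:ℝ) * h = d := by rw [hh]; field_simp; ring
  have hmem : ∀ i : ℕ, i ≤ N → c + (i:ℝ) * h ∈ Set.Icc a b := by
    intro i hi
    constructor
    · have : 0 ≤ (i:ℝ) * h := mul_nonneg (Nat.cast_nonneg i) h0
      linarith
    · have : (i:ℝ) * h ≤ (N:ℝ) * h :=
        mul_le_mul_of_nonneg_right (Nat.cast_le.mpr hi) h0
      linarith
  set F : ℕ → ℝ := fun i => f (c + (i:ℝ) * h) - f d with hF
  set V : ℕ → ℝ := fun i => u (c + (i:ℝ) * h) - u c with hV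
  set g : ℕ → ℝ := fun i => F i * V i with hg
  have hFN : F N = 0 := by rw [hF]; simp only; rw [hyN, sub_self]
  have hV0 : V 0 = 0 := by rw [hV]; simp
  have tele : ∑ i ∈ Finset.range N, (g (i+1) - g i) = 0 := by
    rw [Finset.sum_range_sub g, hg]
    simp only
    rw [hFN, hV0, zero_mul, mul_zero, sub_zero]
  have step1 : (∑ i ∈ Finset.range N,
        f (c + (↑i+1) * h) * (u (c + (↑i+1) * h) - u (c + ↑i * h))) - f d * (u d - u c) =
      ∑ i ∈ Finset.range N, F (i+1) * (V (i+1) - V i) := by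
    have hT : f d * (u d - u c) = ∑ i ∈ Finset.range N, f d * (V (i+1) - V i) := by
      rw [← Finset.mul_sum, Finset.sum_range_sub V, hV0, sub_zero, hV]
      simp only
      rw [hyN]
    rw [hT, ← Finset.sum_sub_distrib]
    apply Finset.sum_congr rfl
    intro i _
    simp only [hF, hV]
    push_cast
    ring
  have step2 : ∑ i ∈ Finset.range N, F (i+1) * (V (i+1) - V i) =
      -∑ i ∈ Finset.range N, (F (i+1) - F i) * V i := by
    have expand : ∀ i : ℕ, F (i+1) * (V (i+1) - V i) =
        (g (i+1) - g i) - (F (i+1) - F i) * V i := by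
      intro i
      simp only [hg]
      ring
    rw [Finset.sum_congr rfl (fun i _ => expand i), Finset.sum_sub_distrib, tele, zero_sub]
  have bound : ∀ i ∈ Finset.range N, |(F (i+1) - F i) * V i| ≤ (L*h) * (H * ((i:ℝ)^r * h^r)) := by
    intro i hi
    rw [Finset.mem_range] at hi
    rw [abs_mul]
    have hfb : |F (i+1) - F i| ≤ L * h := by
      have : F (i+1) - F i = f (c + ((i:ℝ)+1) * h) - f (c + (i:ℝ) * h) := by
        simp only [hF]; push_cast; ring
      rw [this]
      have := hf _ (hmem (i+1) (by omega)) _ (hmem i (by omega))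
      push_cast at this
      calc |f (c + ((i:ℝ)+1) * h) - f (c + (i:ℝ) * h)| ≤
          L * |(c + ((i:ℝ)+1) * h) - (c + (i:ℝ) * h)| := this
        _ = L * h := by rw [show (c + ((i:ℝ)+1) * h) - (c + (i:ℝ) * h) = h by ring,
              abs_of_nonneg h0]
    have hub : |V i| ≤ H * ((i:ℝ)^r * h^r) := by
      have hmem0 : c ∈ Set.Icc a b := ⟨hac, le_trans hcd hdb⟩
      have := hu _ (hmem i (by omega)) _ hmem0
      calc |V i| ≤ H * |(c + (i:ℝ) * h) - c| ^ r := this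
        _ = H * ((i:ℝ)^r * h^r) := by
            rw [show (c + (i:ℝ) * h) - c = (i:ℝ) * h by ring,
              abs_of_nonneg (mul_nonneg (Nat.cast_nonneg i) h0),
              Real.mul_rpow (Nat.cast_nonneg i) h0]
    exact mul_le_mul hfb hub (abs_nonneg _) (by positivity)
  have habs : |∑ i ∈ Finset.range N, (F (i+1) - F i) * V i| ≤
      L * H * (h^r * h) * ∑ i ∈ Finset.range N, (i:ℝ)^r := by
    calc |∑ i ∈ Finset.range N, (F (i+1) - F i) * V i| ≤
        ∑ i ∈ Finset.range N, |(F (i+1) - F i) * V i| := Finset.abs_sum_le_sum_abs _ _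
      _ ≤ ∑ i ∈ Finset.range N, (L*h) * (H * ((i:ℝ)^r * h^r)) := Finset.sum_le_sum bound
      _ = L * H * (h^r * h) * ∑ i ∈ Finset.range N, (i:ℝ)^r := by
          rw [Finset.mul_sum]
          apply Finset.sum_congr rfl
          intro i _
          ring
  have hsum := sum_rpow_le hr N
  have final : L * H * (h^r * h) * ∑ i ∈ Finset.range N, (i:ℝ)^r ≤
      L * H * (d-c) ^ (r+1) / (r+1) := by
    have h1 : L * H * (h^r * h) * ∑ i ∈ Finset.range N, (i:ℝ)^r ≤
        L * H * (h^r * h) * ((N:ℝ)^(r+1)/(r+1)) := by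
      apply mul_le_mul_of_nonneg_left hsum (by positivity)
    have h2 : L * H * (h^r * h) * ((N:ℝ)^(r+1)/(r+1)) = L * H * (d-c) ^ (r+1) / (r+1) := by
      have hdc : d - c = h * N := by rw [hh]; field_simp
      rw [hdc, Real.mul_rpow h0 (Nat.cast_nonneg N), rpow_succ_nonneg h0 hr]
      ring
    linarith
  rw [step1, step2, abs_neg]
  linarith
end piece

section piece2
variable (a b H L r : ℝ) (f u : ℝ → ℝ)

lemma piece_est_left (hr : 0 < r) (hH : 0 ≤ H) (hL : 0 ≤ L)
    (hu : ∀ s ∈ Set.Icc a b, ∀ t ∈ Set.Icc a b, |u s - u t| ≤ H * |s - t| ^ r)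
    (hf : ∀ s ∈ Set.Icc a b, ∀ t ∈ Set.Icc a b, |f s - f t| ≤ L * |s - t|)
    {c d : ℝ} (hac : a ≤ c) (hcd : c ≤ d) (hdb : d ≤ b) {N : ℕ} (hN : 0 < N) :
    |(∑ i ∈ Finset.range N,
        f (c + ↑i * ((d-c)/N)) * (u (c + (↑i+1) * ((d-c)/N)) - u (c + ↑i * ((d-c)/N)))) -
      f c * (u d - u c)| ≤ L * H * (d-c) ^ (r+1) / (r+1) := by
  have hN0 : (N:ℝ) ≠ 0 := Nat.cast_ne_zero.mpr hN.ne'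
  set h : ℝ := (d - c) / N with hh
  have h0 : 0 ≤ h := div_nonneg (by linarith) (Nat.cast_nonneg N)
  have hyN : c + (N:ℝ) * h = d := by rw [hh]; field_simp; ring
  have hmem : ∀ i : ℕ, i ≤ N → c + (i:ℝ) * h ∈ Set.Icc a b := by
    intro i hi
    constructor
    · have : 0 ≤ (i:ℝ) * h := mul_nonneg (Nat.cast_nonneg i) h0
      linarith
    · have : (i:ℝ) * h ≤ (N:ℝ) * h :=
        mul_le_mul_of_nonneg_right (Nat.cast_le.mpr hi) h0
      linarith
  set F : ℕ → ℝ := fun i => f (c + (i:ℝ) * h) - f c with hF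
  set V : ℕ → ℝ := fun i => u (c + (i:ℝ) * h) - u d with hV
  set g : ℕ → ℝ := fun i => F i * V i with hg
  have hF0 : F 0 = 0 := by rw [hF]; simp
  have hVN : V N = 0 := by rw [hV]; simp only; rw [hyN, sub_self]
  have tele : ∑ i ∈ Finset.range N, (g (i+1) - g i) = 0 := by
    rw [Finset.sum_range_sub g, hg]
    simp only
    rw [hF0, hVN, zero_mul, mul_zero, sub_zero]
  have step1 : (∑ i ∈ Finset.range N,
        f (c + ↑i * h) * (u (c + (↑i+1) * h) - u (c + ↑i * h))) - f c * (u d - u c) =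
      ∑ i ∈ Finset.range N, F i * (V (i+1) - V i) := by
    have hT : f c * (u d - u c) = ∑ i ∈ Finset.range N, f c * (V (i+1) - V i) := by
      rw [← Finset.mul_sum, Finset.sum_range_sub V, hV]
      simp only
      rw [hyN]
      push_cast
      ring_nf
    rw [hT, ← Finset.sum_sub_distrib]
    apply Finset.sum_congr rfl
    intro i _
    simp only [hF, hV]
    push_cast
    ring
  have step2 : ∑ i ∈ Finset.range N, F i * (V (i+1) - V i) =
      -∑ i ∈ Finset.range N, (F (i+1) - F i) * V (i+1) := by
    have expand : ∀ i : ℕ, F i * (V (i+1) - V i) =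
        (g (i+1) - g i) - (F (i+1) - F i) * V (i+1) := by
      intro i
      simp only [hg]
      ring
    rw [Finset.sum_congr rfl (fun i _ => expand i), Finset.sum_sub_distrib, tele, zero_sub]
  have bound : ∀ i ∈ Finset.range N, |(F (i+1) - F i) * V (i+1)| ≤
      (L*h) * (H * ((((N-1-i : ℕ)):ℝ)^r * h^r)) := by
    intro i hi
    rw [Finset.mem_range] at hi
    rw [abs_mul]
    have hcast : ((N-1-i : ℕ):ℝ) = (N:ℝ) - 1 - (i:ℝ) := by
      have h1 : N - 1 - i = N - (i+1) := by omega
      rw [h1, Nat.cast_sub (by omega : i + 1 ≤ N)]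
      push_cast
      ring
    have hfb : |F (i+1) - F i| ≤ L * h := by
      have : F (i+1) - F i = f (c + ((i:ℝ)+1) * h) - f (c + (i:ℝ) * h) := by
        simp only [hF]; push_cast; ring
      rw [this]
      have := hf _ (hmem (i+1) (by omega)) _ (hmem i (by omega))
      push_cast at this
      calc |f (c + ((i:ℝ)+1) * h) - f (c + (i:ℝ) * h)| ≤
          L * |(c + ((i:ℝ)+1) * h) - (c + (i:ℝ) * h)| := this
        _ = L * h := by rw [show (c + ((i:ℝ)+1) * h) - (c + (i:ℝ) * h) = h by ring,
              abs_of_nonneg h0]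
    have hub : |V (i+1)| ≤ H * (((N-1-i : ℕ):ℝ)^r * h^r) := by
      have hmemd : d ∈ Set.Icc a b := ⟨le_trans hac hcd, hdb⟩
      have := hu _ (hmem (i+1) (by omega)) _ hmemd
      push_cast at this
      calc |V (i+1)| ≤ H * |(c + ((i:ℝ)+1) * h) - d| ^ r := by
            have hVi : V (i+1) = u (c + ((i:ℝ)+1) * h) - u d := by
              simp only [hV]; push_cast; ring_nf
            rw [hVi]
            exact this
        _ = H * (((N-1-i : ℕ):ℝ)^r * h^r) := by
            have he : (c + ((i:ℝ)+1) * h) - d = -((((N:ℝ) - 1 - i)) * h) := by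
              rw [← hyN]; ring
            rw [he, abs_neg, abs_of_nonneg
                (mul_nonneg (by rw [← hcast]; exact Nat.cast_nonneg _) h0),
              ← hcast, Real.mul_rpow (Nat.cast_nonneg _) h0]
    exact mul_le_mul hfb hub (abs_nonneg _) (by positivity)
  have habs : |∑ i ∈ Finset.range N, (F (i+1) - F i) * V (i+1)| ≤
      L * H * (h^r * h) * ∑ i ∈ Finset.range N, (i:ℝ)^r := by
    have hreflect : ∑ i ∈ Finset.range N, (((N-1-i : ℕ):ℝ))^r = ∑ i ∈ Finset.range N, (i:ℝ)^r :=
      Finset.sum_range_reflect (fun j => ((j:ℕ):ℝ)^r) N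
    calc |∑ i ∈ Finset.range N, (F (i+1) - F i) * V (i+1)| ≤
        ∑ i ∈ Finset.range N, |(F (i+1) - F i) * V (i+1)| := Finset.abs_sum_le_sum_abs _ _
      _ ≤ ∑ i ∈ Finset.range N, (L*h) * (H * ((((N-1-i : ℕ)):ℝ)^r * h^r)) :=
          Finset.sum_le_sum bound
      _ = L * H * (h^r * h) * ∑ i ∈ Finset.range N, (((N-1-i : ℕ)):ℝ)^r := by
          rw [Finset.mul_sum]
          apply Finset.sum_congr rfl
          intro i _
          ring
      _ = L * H * (h^r * h) * ∑ i ∈ Finset.range N, (i:ℝ)^r := by rw [hreflect]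
  have hsum := sum_rpow_le hr N
  have final : L * H * (h^r * h) * ∑ i ∈ Finset.range N, (i:ℝ)^r ≤
      L * H * (d-c) ^ (r+1) / (r+1) := by
    have h1 : L * H * (h^r * h) * ∑ i ∈ Finset.range N, (i:ℝ)^r ≤
        L * H * (h^r * h) * ((N:ℝ)^(r+1)/(r+1)) := by
      apply mul_le_mul_of_nonneg_left hsum (by positivity)
    have h2 : L * H * (h^r * h) * ((N:ℝ)^(r+1)/(r+1)) = L * H * (d-c) ^ (r+1) / (r+1) := by
      have hdc : d - c = h * N := by rw [hh]; field_simp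
      rw [hdc, Real.mul_rpow h0 (Nat.cast_nonneg N), rpow_succ_nonneg h0 hr]
      ring
    linarith
  rw [step1, step2, abs_neg]
  linarith
end piece2

namespace TaggedPartition

def glue {a m b : ℝ} (P : TaggedPartition a m) (Q : TaggedPartition m b) :
    TaggedPartition a b where
  n := P.n + Q.n
  pts := fun i => if i ≤ P.n then P.pts i else Q.pts (i - P.n)
  tag := fun i => if i < P.n then P.tag i else Q.tag (i - P.n)
  mono := by
    intro i
    by_cases h1 : i + 1 ≤ P.n
    · simp only [if_pos h1, if_pos (by omega : i ≤ P.n)]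
      exact P.mono i
    · by_cases h2 : i ≤ P.n
      · have hi : i = P.n := by omega
        subst hi
        rw [if_pos le_rfl, if_neg h1, Nat.add_sub_cancel_left, P.last]
        have h := Q.mono 0
        rw [Q.first] at h
        exact h
      · simp only [if_neg h1, if_neg h2]
        have : i + 1 - P.n = (i - P.n) + 1 := by omega
        rw [this]
        exact Q.mono (i - P.n)
  first := by
    simp only [if_pos (Nat.zero_le _)]
    exact P.first
  last := by
    by_cases h : Q.n = 0
    · have hmb : m = b := by rw [← Q.first, show (0:ℕ) = Q.n from h.symm, Q.last]
      simp only [h, add_zero, if_pos le_rfl, P.last]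
      exact hmb
    · simp only [if_neg (by omega : ¬ P.n + Q.n ≤ P.n), Nat.add_sub_cancel_left]
      exact Q.last
  tag_mem := by
    intro i
    by_cases h1 : i < P.n
    · simp only [if_pos h1, if_pos (by omega : i ≤ P.n), if_pos (by omega : i + 1 ≤ P.n)]
      exact P.tag_mem i
    · simp only [if_neg h1]
      by_cases h2 : i ≤ P.n
      · have hi : i = P.n := by omega
        subst hi
        rw [if_pos le_rfl, if_neg (by omega : ¬ P.n + 1 ≤ P.n), Nat.sub_self,
          Nat.add_sub_cancel_left, P.last]
        have h := Q.tag_mem 0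
        rw [Q.first] at h
        exact h
      · simp only [if_neg h2, if_neg (by omega : ¬ i + 1 ≤ P.n)]
        have e : i + 1 - P.n = (i - P.n) + 1 := by omega
        rw [e]
        exact Q.tag_mem (i - P.n)

lemma glue_pts_left {a m b : ℝ} (P : TaggedPartition a m) (Q : TaggedPartition m b)
    {i : ℕ} (h : i ≤ P.n) : (P.glue Q).pts i = P.pts i := by
  simp only [glue, if_pos h]

lemma glue_pts_right {a m b : ℝ} (P : TaggedPartition a m) (Q : TaggedPartition m b)
    {i : ℕ} (h : P.n ≤ i) : (P.glue Q).pts i = Q.pts (i - P.n) := by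
  by_cases h2 : i ≤ P.n
  · have hi : i = P.n := by omega
    subst hi
    simp only [glue, if_pos le_rfl, Nat.sub_self, P.last, Q.first]
  · simp only [glue, if_neg h2]

lemma glue_RSsum {a m b : ℝ} (f u : ℝ → ℝ) (P : TaggedPartition a m)
    (Q : TaggedPartition m b) :
    RSsum f u (P.glue Q) = RSsum f u P + RSsum f u Q := by
  unfold RSsum
  show ∑ i ∈ Finset.range (P.n + Q.n), _ = _
  rw [Finset.sum_range_add]
  congr 1
  · apply Finset.sum_congr rfl
    intro i hi
    rw [Finset.mem_range] at hi
    rw [glue_pts_left P Q (by omega : i ≤ P.n),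
      glue_pts_left P Q (by omega : i + 1 ≤ P.n)]
    have : (P.glue Q).tag i = P.tag i := by simp only [glue, if_pos hi]
    rw [this]
  · apply Finset.sum_congr rfl
    intro j hj
    rw [Finset.mem_range] at hj
    rw [glue_pts_right P Q (by omega : P.n ≤ P.n + j),
      glue_pts_right P Q (by omega : P.n ≤ P.n + j + 1)]
    have e1 : P.n + j - P.n = j := by omega
    have e2 : P.n + j + 1 - P.n = j + 1 := by omega
    rw [e1, e2]
    have : (P.glue Q).tag (P.n + j) = Q.tag j := by
      simp only [glue, if_neg (by omega : ¬ P.n + j < P.n), e1]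
    rw [this]

lemma glue_mesh {a m b : ℝ} (P : TaggedPartition a m) (Q : TaggedPartition m b)
    {δ : ℝ} (hP : ∀ i < P.n, P.pts (i+1) - P.pts i < δ)
    (hQ : ∀ i < Q.n, Q.pts (i+1) - Q.pts i < δ) :
    ∀ i < (P.glue Q).n, (P.glue Q).pts (i+1) - (P.glue Q).pts i < δ := by
  intro i hi
  have hi' : i < P.n + Q.n := hi
  by_cases h1 : i < P.n
  · rw [glue_pts_left P Q (by omega : i ≤ P.n), glue_pts_left P Q (by omega : i + 1 ≤ P.n)]
    exact hP i h1
  · rw [glue_pts_right P Q (by omega : P.n ≤ i), glue_pts_right P Q (by omega : P.n ≤ i + 1)]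
    have e : i + 1 - P.n = (i - P.n) + 1 := by omega
    rw [e]
    exact hQ (i - P.n) (by omega)

end TaggedPartition


noncomputable def upts (c d : ℝ) (N : ℕ) : ℕ → ℝ := fun i => c + ((min i N : ℕ):ℝ) * ((d-c)/N)

lemma upts_eq (c d : ℝ) (N : ℕ) {i : ℕ} (h : i ≤ N) :
    upts c d N i = c + (i:ℝ) * ((d-c)/N) := by
  simp [upts, min_eq_left h]

lemma upts_mono {c d : ℝ} (hcd : c ≤ d) (N : ℕ) (i : ℕ) :
    upts c d N i ≤ upts c d N (i+1) := by
  unfold upts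
  have h1 : ((min i N : ℕ):ℝ) ≤ ((min (i+1) N : ℕ):ℝ) :=
    Nat.cast_le.mpr (by omega)
  have h2 : (0:ℝ) ≤ (d-c)/N := div_nonneg (by linarith) (Nat.cast_nonneg N)
  nlinarith

lemma upts_last {c d : ℝ} (N : ℕ) (hN : 0 < N) : upts c d N N = d := by
  rw [upts_eq c d N le_rfl]
  have : (N:ℝ) ≠ 0 := Nat.cast_ne_zero.mpr hN.ne'
  field_simp
  ring

noncomputable def uniformR (c d : ℝ) (hcd : c ≤ d) (N : ℕ) (hN : 0 < N) : TaggedPartition c d where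
  n := N
  pts := upts c d N
  tag := fun i => upts c d N (i+1)
  mono := upts_mono hcd N
  first := by simp [upts]
  last := upts_last N hN
  tag_mem := fun i => ⟨upts_mono hcd N i, le_rfl⟩

noncomputable def uniformL (c d : ℝ) (hcd : c ≤ d) (N : ℕ) (hN : 0 < N) : TaggedPartition c d where
  n := N
  pts := upts c d N
  tag := upts c d N
  mono := upts_mono hcd N
  first := by simp [upts]
  last := upts_last N hN
  tag_mem := fun i => ⟨le_rfl, upts_mono hcd N i⟩

lemma uniformR_RSsum (f u : ℝ → ℝ) {c d : ℝ} (hcd : c ≤ d) {N : ℕ} (hN : 0 < N) :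
    RSsum f u (uniformR c d hcd N hN) = ∑ i ∈ Finset.range N,
      f (c + (↑i+1) * ((d-c)/N)) * (u (c + (↑i+1) * ((d-c)/N)) - u (c + ↑i * ((d-c)/N))) := by
  unfold RSsum
  apply Finset.sum_congr rfl
  intro i hi
  rw [Finset.mem_range] at hi
  replace hi : i < N := hi
  show f (upts c d N (i+1)) * (u (upts c d N (i+1)) - u (upts c d N i)) = _
  rw [upts_eq c d N (by omega : i+1 ≤ N), upts_eq c d N (by omega : i ≤ N)]
  push_cast
  ring_nf

lemma uniformL_RSsum (f u : ℝ → ℝ) {c d : ℝ} (hcd : c ≤ d) {N : ℕ} (hN : 0 < N) :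
    RSsum f u (uniformL c d hcd N hN) = ∑ i ∈ Finset.range N,
      f (c + ↑i * ((d-c)/N)) * (u (c + (↑i+1) * ((d-c)/N)) - u (c + ↑i * ((d-c)/N))) := by
  unfold RSsum
  apply Finset.sum_congr rfl
  intro i hi
  rw [Finset.mem_range] at hi
  replace hi : i < N := hi
  show f (upts c d N i) * (u (upts c d N (i+1)) - u (upts c d N i)) = _
  rw [upts_eq c d N (by omega : i+1 ≤ N), upts_eq c d N (by omega : i ≤ N)]
  push_cast
  ring_nf

lemma upts_gap (c d : ℝ) (N : ℕ) {i : ℕ} (hi : i < N) :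
    upts c d N (i+1) - upts c d N i = (d-c)/N := by
  rw [upts_eq c d N (by omega : i+1 ≤ N), upts_eq c d N (by omega : i ≤ N)]
  push_cast
  ring

lemma abs_add5 (A B C D E : ℝ) : |A+(B+(C+(D+E)))| ≤ |A|+|B|+|C|+|D|+|E| := by
  have h1 := abs_add_le A (B+(C+(D+E)))
  have h2 := abs_add_le B (C+(D+E))
  have h3 := abs_add_le C (D+E)
  have h4 := abs_add_le D E
  linarith


section wrappers
variable (a b H L r : ℝ) (f u : ℝ → ℝ)

lemma uniformR_est (hr : 0 < r) (hH : 0 ≤ H) (hL : 0 ≤ L)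
    (hu : ∀ s ∈ Set.Icc a b, ∀ t ∈ Set.Icc a b, |u s - u t| ≤ H * |s - t| ^ r)
    (hf : ∀ s ∈ Set.Icc a b, ∀ t ∈ Set.Icc a b, |f s - f t| ≤ L * |s - t|)
    {c d : ℝ} (hac : a ≤ c) (hcd : c ≤ d) (hdb : d ≤ b) {N : ℕ} (hN : 0 < N) :
    |RSsum f u (uniformR c d hcd N hN) - f d * (u d - u c)| ≤ L * H * (d-c) ^ (r+1) / (r+1) := by
  rw [uniformR_RSsum f u hcd hN]
  exact piece_est_right a b H L r f u hr hH hL hu hf hac hcd hdb hN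

lemma uniformL_est (hr : 0 < r) (hH : 0 ≤ H) (hL : 0 ≤ L)
    (hu : ∀ s ∈ Set.Icc a b, ∀ t ∈ Set.Icc a b, |u s - u t| ≤ H * |s - t| ^ r)
    (hf : ∀ s ∈ Set.Icc a b, ∀ t ∈ Set.Icc a b, |f s - f t| ≤ L * |s - t|)
    {c d : ℝ} (hac : a ≤ c) (hcd : c ≤ d) (hdb : d ≤ b) {N : ℕ} (hN : 0 < N) :
    |RSsum f u (uniformL c d hcd N hN) - f c * (u d - u c)| ≤ L * H * (d-c) ^ (r+1) / (r+1) := by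
  rw [uniformL_RSsum f u hcd hN]
  exact piece_est_left a b H L r f u hr hH hL hu hf hac hcd hdb hN

end wrappers


theorem two_point_dual_Lp_lipschitz
    (a b H L r p t0 x t1 I : ℝ) (f u : ℝ → ℝ)
    (hp : 1 < p) (hr : 0 < r) (hr1 : r ≤ 1) (hH : 0 ≤ H) (hL : 0 ≤ L)
    (hu : ∀ s ∈ Set.Icc a b, ∀ t ∈ Set.Icc a b, |u s - u t| ≤ H * |s - t| ^ r)
    (hf : ∀ s ∈ Set.Icc a b, ∀ t ∈ Set.Icc a b, |f s - f t| ≤ L * |s - t|)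
    (ht0 : a ≤ t0) (ht0x : t0 ≤ x) (hxt1 : x ≤ t1) (ht1 : t1 ≤ b)
    (hI : IsRSIntegral f u a b I) :
    |I - (u x - u a) * f t0 - (u b - u x) * f t1| ≤
      L * H * ((t0 - a) ^ (r + 1) / (r * p + 1) ^ (1 / p) +
        (t1 - t0) ^ (1 - 1 / p) *
          (((x - t0) ^ (r * p + 1) + (t1 - x) ^ (r * p + 1)) / (r * p + 1)) ^ (1 / p) +
        (b - t1) ^ (r + 1) / (r * p + 1) ^ (1 / p)) := by
  have hp0 : (0:ℝ) < p := by linarith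
  have hab : a ≤ b := by linarith
  -- Step 1: the discrete bound
  have hbd : |I - (u x - u a) * f t0 - (u b - u x) * f t1| ≤
      L * H * (t0-a) ^ (r+1) / (r+1) + L * H * (x-t0) ^ (r+1) / (r+1) +
      L * H * (t1-x) ^ (r+1) / (r+1) + L * H * (b-t1) ^ (r+1) / (r+1) := by
    apply le_of_forall_pos_le_add
    intro ε hε
    obtain ⟨δ, hδ, hconv⟩ := hI ε hε
    obtain ⟨N₀, hN₀⟩ := exists_nat_gt ((b-a)/δ)
    have hN : 0 < N₀ + 1 := Nat.succ_pos _
    set N := N₀ + 1 with hNdef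
    have hNR : (0:ℝ) < N := by exact_mod_cast hN
    have hNb : (b-a)/δ < (N:ℝ) := by
      rw [hNdef]
      push_cast
      linarith
    have hgap : (b-a)/N < δ := by
      rw [div_lt_iff₀ hNR]
      have := (div_lt_iff₀ hδ).mp hNb
      linarith
    have meshk : ∀ (c d : ℝ), c ≤ d → d - c ≤ b - a → ∀ i < N,
        upts c d N (i+1) - upts c d N i < δ := by
      intro c d h2 h3 i hi
      rw [upts_gap c d N hi]
      calc (d-c)/N ≤ (b-a)/N := (div_le_div_iff_of_pos_right hNR).mpr h3
        _ < δ := hgap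
    have hmesh : ∀ i < ((uniformR a t0 ht0 N hN).glue ((uniformL t0 x ht0x N hN).glue
        ((uniformR x t1 hxt1 N hN).glue (uniformL t1 b ht1 N hN)))).n,
        ((uniformR a t0 ht0 N hN).glue ((uniformL t0 x ht0x N hN).glue
        ((uniformR x t1 hxt1 N hN).glue (uniformL t1 b ht1 N hN)))).pts (i+1) -
        ((uniformR a t0 ht0 N hN).glue ((uniformL t0 x ht0x N hN).glue
        ((uniformR x t1 hxt1 N hN).glue (uniformL t1 b ht1 N hN)))).pts i < δ := by
      apply TaggedPartition.glue_mesh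
      · exact meshk a t0 ht0 (by linarith)
      apply TaggedPartition.glue_mesh
      · exact meshk t0 x ht0x (by linarith)
      apply TaggedPartition.glue_mesh
      · exact meshk x t1 hxt1 (by linarith)
      · exact meshk t1 b ht1 (by linarith)
    have hclose := hconv _ hmesh
    rw [TaggedPartition.glue_RSsum, TaggedPartition.glue_RSsum,
      TaggedPartition.glue_RSsum] at hclose
    have E1 := uniformR_est a b H L r f u hr hH hL hu hf le_rfl ht0 (by linarith) hN
    have E2 := uniformL_est a b H L r f u hr hH hL hu hf ht0 ht0x (by linarith) hN
    have E3 := uniformR_est a b H L r f u hr hH hL hu hf (by linarith) hxt1 ht1 hN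
    have E4 := uniformL_est a b H L r f u hr hH hL hu hf (by linarith) ht1 le_rfl hN
    have hid : I - (u x - u a) * f t0 - (u b - u x) * f t1 =
        -(RSsum f u (uniformR a t0 ht0 N hN) + (RSsum f u (uniformL t0 x ht0x N hN) +
            (RSsum f u (uniformR x t1 hxt1 N hN) + RSsum f u (uniformL t1 b ht1 N hN))) - I) +
          ((RSsum f u (uniformR a t0 ht0 N hN) - f t0 * (u t0 - u a)) +
          ((RSsum f u (uniformL t0 x ht0x N hN) - f t0 * (u x - u t0)) +
          ((RSsum f u (uniformR x t1 hxt1 N hN) - f t1 * (u t1 - u x)) +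
           (RSsum f u (uniformL t1 b ht1 N hN) - f t1 * (u b - u t1))))) := by
      ring
    rw [hid]
    have htri := abs_add5
      (-(RSsum f u (uniformR a t0 ht0 N hN) + (RSsum f u (uniformL t0 x ht0x N hN) +
          (RSsum f u (uniformR x t1 hxt1 N hN) + RSsum f u (uniformL t1 b ht1 N hN))) - I))
      (RSsum f u (uniformR a t0 ht0 N hN) - f t0 * (u t0 - u a))
      (RSsum f u (uniformL t0 x ht0x N hN) - f t0 * (u x - u t0))
      (RSsum f u (uniformR x t1 hxt1 N hN) - f t1 * (u t1 - u x))
      (RSsum f u (uniformL t1 b ht1 N hN) - f t1 * (u b - u t1))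
    rw [abs_neg] at htri
    linarith
  -- Step 2: numeric comparison
  have hbp := bern_pos hr hp
  have hX1 : (0:ℝ) ≤ (t0-a) ^ (r+1) := Real.rpow_nonneg (by linarith) _
  have hX4 : (0:ℝ) ≤ (b-t1) ^ (r+1) := Real.rpow_nonneg (by linarith) _
  have c1 : L * H * (t0-a) ^ (r+1) / (r+1) ≤ L * H * ((t0-a) ^ (r+1) / (r*p+1) ^ (1/p)) := by
    have h1 : (t0-a) ^ (r+1) / (r+1) ≤ (t0-a) ^ (r+1) / (r*p+1) ^ (1/p) := by
      gcongr
      exact bern_aux hr hp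
    calc L * H * (t0-a) ^ (r+1) / (r+1) = L * H * ((t0-a) ^ (r+1) / (r+1)) := by ring
      _ ≤ L * H * ((t0-a) ^ (r+1) / (r*p+1) ^ (1/p)) :=
        mul_le_mul_of_nonneg_left h1 (by positivity)
  have c4 : L * H * (b-t1) ^ (r+1) / (r+1) ≤ L * H * ((b-t1) ^ (r+1) / (r*p+1) ^ (1/p)) := by
    have h1 : (b-t1) ^ (r+1) / (r+1) ≤ (b-t1) ^ (r+1) / (r*p+1) ^ (1/p) := by
      gcongr
      exact bern_aux hr hp
    calc L * H * (b-t1) ^ (r+1) / (r+1) = L * H * ((b-t1) ^ (r+1) / (r+1)) := by ring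
      _ ≤ L * H * ((b-t1) ^ (r+1) / (r*p+1) ^ (1/p)) :=
        mul_le_mul_of_nonneg_left h1 (by positivity)
  have c23 : L * H * (x-t0) ^ (r+1) / (r+1) + L * H * (t1-x) ^ (r+1) / (r+1) ≤
      L * H * ((t1-t0) ^ (1-1/p) *
        (((x-t0) ^ (r*p+1) + (t1-x) ^ (r*p+1)) / (r*p+1)) ^ (1/p)) := by
    have hmb := middle_bound hr hp (by linarith : (0:ℝ) ≤ x - t0) (by linarith : (0:ℝ) ≤ t1 - x)
    rw [show (x - t0) + (t1 - x) = t1 - t0 by ring] at hmb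
    have := mul_le_mul_of_nonneg_left hmb (by positivity : (0:ℝ) ≤ L * H)
    calc L * H * (x-t0) ^ (r+1) / (r+1) + L * H * (t1-x) ^ (r+1) / (r+1) =
        L * H * (((x-t0) ^ (r+1) + (t1-x) ^ (r+1)) / (r+1)) := by ring
      _ ≤ _ := this
  have hgoal : L * H * ((t0 - a) ^ (r + 1) / (r * p + 1) ^ (1 / p) +
        (t1 - t0) ^ (1 - 1 / p) *
          (((x - t0) ^ (r * p + 1) + (t1 - x) ^ (r * p + 1)) / (r * p + 1)) ^ (1 / p) +
        (b - t1) ^ (r + 1) / (r * p + 1) ^ (1 / p)) =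
      L * H * ((t0-a) ^ (r+1) / (r*p+1) ^ (1/p)) +
      L * H * ((t1-t0) ^ (1-1/p) *
        (((x-t0) ^ (r*p+1) + (t1-x) ^ (r*p+1)) / (r*p+1)) ^ (1/p)) +
      L * H * ((b-t1) ^ (r+1) / (r*p+1) ^ (1/p)) := by ring
  rw [hgoal]
  linarith
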